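/- Let B and C be abelian categories and let F ⊣ G be an adjunction with F : B ⥤ C additive and unit η. Then the comparison functor Φ : B ⥤ Coalg(T) to the coalgebras over the induced comonad T on C is fully faithful if and only if for every object H of B the unit morphism η_H : H ⟶ G(F(H)) is a monomorphism. -/

import Mathlib

open CategoryTheory CategoryTheory.Limits

universe v₁ v₂ u₁ u₂

private lemma unit_nat'
    {B : Type u₁} [Category.{v₁} B]
    {C : Type u₂} [Category.{v₂} C]
    (F : B ⥤ C) (G : C ⥤ B) (adj : F ⊣ G) {X Y : B} (f : X ⟶ Y) :
    adj.unit.app X ≫ G.map (F.map f) = f ≫ adj.unit.app Y := by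
  simpa using (adj.unit.naturality f).symm

private lemma right_adjoint_map_zero
    {B : Type u₁} [Category.{v₁} B] [Abelian B]
    {C : Type u₂} [Category.{v₂} C] [Abelian C]
    (F : B ⥤ C) [F.Additive] (G : C ⥤ B) (adj : F ⊣ G) (X Y : C) :
    G.map (0 : X ⟶ Y) = 0 := by
  apply (adj.homEquiv (G.obj X) Y).symm.injective
  rw [Adjunction.homEquiv_counit, Adjunction.homEquiv_counit, adj.counit_naturality]
  simp

/-- For an adjunction `F ⊣ G` between abelian categories with `F` additive, the comparison
functor to the coalgebras over the induced comonad is fully faithful iff every unit morphism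
`η_H : H ⟶ G(F(H))` is a monomorphism. -/
theorem comparison_fullyFaithful_iff_unit_mono
    {B : Type u₁} [Category.{v₁} B] [Abelian B]
    {C : Type u₂} [Category.{v₂} C] [Abelian C]
    (F : B ⥤ C) [F.Additive] (G : C ⥤ B) (adj : F ⊣ G) :
    ((Comonad.comparison adj).Full ∧ (Comonad.comparison adj).Faithful) ↔
      ∀ H : B, Mono (adj.unit.app H) := by
  have nat : ∀ {X Y : B} (f : X ⟶ Y),
      adj.unit.app X ≫ G.map (F.map f) = f ≫ adj.unit.app Y :=
    fun f => unit_nat' F G adj f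
  constructor
  · rintro ⟨_, faith⟩ H
    constructor
    intro X f g hfg
    have hF : F.map f = F.map g := by
      apply (adj.homEquiv X (F.obj H)).injective
      rw [Adjunction.homEquiv_unit, Adjunction.homEquiv_unit, nat f, nat g]
      exact hfg
    apply (Comonad.comparison adj).map_injective
    ext
    exact hF
  · intro hmono
    constructor
    · constructor
      intro H₁ H₂ α
      set ψ : H₁ ⟶ G.obj (F.obj H₂) := adj.unit.app H₁ ≫ G.map α.f with hψ
      have key : ψ ≫ G.map (F.map (adj.unit.app H₂)) =
          ψ ≫ adj.unit.app (G.obj (F.obj H₂)) := by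
        have hα : F.map (adj.unit.app H₁) ≫ F.map (G.map α.f) =
            α.f ≫ F.map (adj.unit.app H₂) := by
          have := α.h
          dsimp [Adjunction.toComonad] at this
          exact this
        calc ψ ≫ G.map (F.map (adj.unit.app H₂))
            = adj.unit.app H₁ ≫ G.map (α.f ≫ F.map (adj.unit.app H₂)) := by
              rw [hψ, Category.assoc]; erw [G.map_comp]; rfl
          _ = adj.unit.app H₁ ≫ G.map (F.map (adj.unit.app H₁) ≫ F.map (G.map (show F.obj H₁ ⟶ F.obj H₂ from α.f))) := by
              exact congrArg (fun x => adj.unit.app H₁ ≫ G.map x) hα.symm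
          _ = (adj.unit.app H₁ ≫ G.map (F.map (adj.unit.app H₁))) ≫
                G.map (F.map (G.map (show F.obj H₁ ⟶ F.obj H₂ from α.f))) := by simp
          _ = (adj.unit.app H₁ ≫ adj.unit.app (G.obj (F.obj H₁))) ≫
                G.map (F.map (G.map (show F.obj H₁ ⟶ F.obj H₂ from α.f))) := by
              rw [nat (X := H₁) (Y := G.obj (F.obj H₁)) (adj.unit.app H₁)]
          _ = adj.unit.app H₁ ≫ adj.unit.app (G.obj (F.obj H₁)) ≫
                G.map (F.map (G.map (show F.obj H₁ ⟶ F.obj H₂ from α.f))) := by simp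
          _ = adj.unit.app H₁ ≫ G.map α.f ≫ adj.unit.app (G.obj (F.obj H₂)) := by
              rw [nat (X := G.obj (F.obj H₁)) (Y := G.obj (F.obj H₂)) (G.map α.f)]; rfl
          _ = ψ ≫ adj.unit.app (G.obj (F.obj H₂)) := by simp [hψ]; rfl
      have := hmono H₂
      have hψq : ψ ≫ cokernel.π (adj.unit.app H₂) = 0 := by
        have hQ := hmono (cokernel (adj.unit.app H₂))
        rw [← cancel_mono (adj.unit.app (cokernel (adj.unit.app H₂)))]
        rw [Category.assoc, ← nat (X := G.obj (F.obj H₂)) (cokernel.π (adj.unit.app H₂)), ← Category.assoc, ← key]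
        rw [Category.assoc, ← G.map_comp, ← F.map_comp, cokernel.condition,
          F.map_zero, right_adjoint_map_zero F G adj]
        simp
      refine ⟨Abelian.monoLift (adj.unit.app H₂) ψ hψq, ?_⟩
      ext
      show F.map _ = α.f
      apply (adj.homEquiv H₁ (F.obj H₂)).injective
      erw [Adjunction.homEquiv_unit, Adjunction.homEquiv_unit,
        nat (Abelian.monoLift (adj.unit.app H₂) ψ hψq)]
      simp only [Functor.id_obj]
      rw [Abelian.monoLift_comp]
    · constructor
      intro H₁ H₂ f g w
      have hF : F.map f = F.map g := congrArg Comonad.Coalgebra.Hom.f w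
      have := hmono H₂
      rw [← cancel_mono (adj.unit.app H₂), ← nat f, ← nat g, hF]
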